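/- Let τ ∈ iℝ_{>0} and α ∈ ℝ with e^{3iα} ≠ 1, and set s = e^{iα}. Define X(z) = e^{−4πτi/3} θ(z,3τ) θ(z−πτ,3τ)/(θ(z+πτ,3τ) θ(z−2πτ,3τ)) and L(z) = (1/(1−e^{3iα}))·( e^{3iα} + e^{2iα}/X(z) + e^{iα} X(z−πτ) ) + ( e^{iα+5iπτ/3} θ(πτ,3τ) θ'(0,τ) / ((1−e^{3iα}) θ(α/2 − 2πτ/3, τ) θ'(0,3τ)) ) · θ(z−2πτ,3τ) θ(z − α/2 + 2πτ/3, τ) / (θ(z,τ) θ(z,3τ)). Then for every z ∈ ℂ at which all quantities are defined and X(z) ≠ 0, one has 1 = −L(z) + L(z+πτ)/(s·X(z)). -/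

import Mathlib

open scoped BigOperators
noncomputable section

abbrev WSt : Type := ℤ × ℕ × ℕ

def cellStep (v w : WSt) : Prop :=
  w = (v.1, v.2.1 + 1, v.2.2 + 1) ∨
  (1 ≤ v.2.2 ∧ w = (v.1, v.2.1, v.2.2 - 1)) ∨
  (1 ≤ v.2.1 ∧ w = (v.1, v.2.1 - 1, v.2.2)) ∨
  (v.2.1 = 0 ∧ w = (v.1 + 1, v.2.2, 0)) ∨
  (v.2.2 = 0 ∧ w = (v.1 - 1, 0, v.2.1 + 1))

def vertStep (v w : WSt) : Prop :=
  w = (v.1, v.2.1 + 1, v.2.2 + 1) ∨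
  (1 ≤ v.2.2 ∧ w = (v.1, v.2.1, v.2.2 - 1)) ∨
  (1 ≤ v.2.1 ∧ w = (v.1, v.2.1 - 1, v.2.2)) ∨
  (v.2.1 = 0 ∧ 1 ≤ v.2.2 ∧ w = (v.1 + 1, v.2.2 - 1, 0)) ∨
  (v.2.2 = 0 ∧ w = (v.1 - 1, 0, v.2.1 + 2))

def pathCount (step : WSt → WSt → Prop) (n : ℕ) (v : WSt) : ℕ :=
  Nat.card {p : Fin (n + 1) → WSt //
    p 0 = ((0 : ℤ), 0, 0) ∧ p (Fin.last n) = v ∧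
    ∀ i : Fin n, step (p i.castSucc) (p i.succ)}

/-- number of cell-centred excursions of length `n` with winding angle `2πk/3` -/
def eCell (n : ℕ) (k : ℤ) : ℕ := pathCount cellStep n (k, 0, 0)

/-- number of vertex-centred walks of length `n` with winding angle `2πk/3` -/
def eVert (n : ℕ) (k : ℤ) : ℕ := pathCount vertStep n (k, 0, 0)

/-- The series `T_k(u,q)`. -/
def Tk (k : ℕ) (u q : ℂ) : ℂ :=
  ∑' n : ℕ, (-1 : ℂ) ^ n * ((2 * n + 1 : ℕ) : ℂ) ^ k * q ^ (n * (n + 1) / 2) *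
    (u ^ (n + 1) - (-1 : ℂ) ^ k * u ^ (-(n : ℤ)))

/-- Jacobi theta function θ₁₁. -/
def jTheta (z τ : ℂ) : ℂ :=
  ∑' n : ℤ, (-1 : ℂ) ^ n *
    Complex.exp (((2 * (n : ℂ) + 1) / 2) ^ 2 * Complex.I * (Real.pi : ℂ) * τ +
      (2 * (n : ℂ) + 1) * Complex.I * z)


lemma jTheta_qper (z τ : ℂ) :
    jTheta (z + Real.pi * τ) τ
      = -Complex.exp (-(Complex.I * Real.pi * τ) - 2 * Complex.I * z) * jTheta z τ := by
  unfold jTheta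
  rw [← tsum_mul_left]
  rw [← (Equiv.addRight (1 : ℤ)).tsum_eq (fun m : ℤ =>
    -Complex.exp (-(Complex.I * Real.pi * τ) - 2 * Complex.I * z) *
      ((-1 : ℂ) ^ m *
        Complex.exp (((2 * (m : ℂ) + 1) / 2) ^ 2 * Complex.I * (Real.pi : ℂ) * τ +
          (2 * (m : ℂ) + 1) * Complex.I * z)))]
  refine tsum_congr fun n => ?_
  simp only [Equiv.coe_addRight]
  push_cast
  rw [zpow_add_one₀ (by norm_num : (-1:ℂ) ≠ 0)]
  have h2 : Complex.exp (-(Complex.I * ↑Real.pi * τ) - 2 * Complex.I * z) *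
      Complex.exp (((2 * ((n:ℂ) + 1) + 1) / 2) ^ 2 * Complex.I * ↑Real.pi * τ +
        (2 * ((n:ℂ) + 1) + 1) * Complex.I * z)
      = Complex.exp (((2 * (n:ℂ) + 1) / 2) ^ 2 * Complex.I * ↑Real.pi * τ +
        (2 * (n:ℂ) + 1) * Complex.I * (z + ↑Real.pi * τ)) := by
    rw [← Complex.exp_add]; congr 1; ring
  generalize (-1:ℂ)^n = e
  linear_combination (-e) * h2

/-- derivative of θ with respect to z -/
def jTheta' (z τ : ℂ) : ℂ := deriv (fun w => jTheta w τ) z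

/-- parameterising function X(z) for the Kreweras kernel -/
def Xfun (τ z : ℂ) : ℂ :=
  Complex.exp (-(4 * (Real.pi : ℂ) * τ * Complex.I) / 3) *
    (jTheta z (3 * τ) * jTheta (z - Real.pi * τ) (3 * τ)) /
    (jTheta (z + Real.pi * τ) (3 * τ) * jTheta (z - 2 * Real.pi * τ) (3 * τ))

/-- The function `L(z)` from the solution of the functional equation. -/
def Lfun (τ : ℂ) (α : ℝ) (z : ℂ) : ℂ :=
  (1 / (1 - Complex.exp (3 * Complex.I * α))) *
    (Complex.exp (3 * Complex.I * α) + Complex.exp (2 * Complex.I * α) / Xfun τ z +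
      Complex.exp (Complex.I * α) * Xfun τ (z - Real.pi * τ)) +
  (Complex.exp (Complex.I * α + 5 * Complex.I * Real.pi * τ / 3) *
      jTheta (Real.pi * τ) (3 * τ) * jTheta' 0 τ /
    ((1 - Complex.exp (3 * Complex.I * α)) *
      jTheta ((α : ℂ) / 2 - 2 * Real.pi * τ / 3) τ * jTheta' 0 (3 * τ))) *
  (jTheta (z - 2 * Real.pi * τ) (3 * τ) * jTheta (z - (α : ℂ) / 2 + 2 * Real.pi * τ / 3) τ /
    (jTheta z τ * jTheta z (3 * τ)))


lemma algKey (x x' x'' w t k S S' : ℂ) (hx : x ≠ 0) (hx' : x' ≠ 0) (hw : w ≠ 0) (ht : t ≠ 0)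
    (hmul : x'' * x * x' = 1) (ht2 : t = 1 - w ^ 3) (hS : S' = w * x * S) :
    1 = -(1 / t * (w ^ 3 + w ^ 2 / x + w * x'') + k * S) +
      (1 / t * (w ^ 3 + w ^ 2 / x' + w * x) + k * S') / (w * x) := by
  have hx'' : x'' = 1 / (x * x') := by
    field_simp
    linear_combination hmul
  subst hS hx''
  field_simp
  rw [ht2]
  ring

set_option maxHeartbeats 4000000 in
/-- equation (4): the equation satisfied by `L(z)`. -/
theorem L_equation
    (y : ℝ) (hy : 0 < y) (τ : ℂ) (hτ : τ = Complex.I * y)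
    (α : ℝ) (hα : Complex.exp (3 * Complex.I * α) ≠ 1)
    (s : ℂ) (hs : s = Complex.exp (Complex.I * α))
    (z : ℂ)
    (hdX1 : jTheta (z + Real.pi * τ) (3 * τ) * jTheta (z - 2 * Real.pi * τ) (3 * τ) ≠ 0)
    (hdX2 : jTheta z (3 * τ) * jTheta (z - 3 * Real.pi * τ) (3 * τ) ≠ 0)
    (hdX3 : jTheta (z + 2 * Real.pi * τ) (3 * τ) * jTheta (z - Real.pi * τ) (3 * τ) ≠ 0)
    (hdL1 : jTheta z τ * jTheta z (3 * τ) ≠ 0)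
    (hdL2 : jTheta (z + Real.pi * τ) τ * jTheta (z + Real.pi * τ) (3 * τ) ≠ 0)
    (hdα : jTheta ((α : ℂ) / 2 - 2 * Real.pi * τ / 3) τ ≠ 0)
    (hdθ : jTheta' 0 (3 * τ) ≠ 0)
    (hXz : Xfun τ z ≠ 0) (hXzp : Xfun τ (z + Real.pi * τ) ≠ 0) :
    1 = -Lfun τ α z + Lfun τ α (z + Real.pi * τ) / (s * Xfun τ z) := by
  subst hs
  have q1 := jTheta_qper (z - 3 * (Real.pi:ℂ) * τ) (3 * τ)
  rw [show z - 3 * (Real.pi:ℂ) * τ + (Real.pi:ℂ) * (3 * τ) = z by ring] at q1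
  have q2 := jTheta_qper (z - (Real.pi:ℂ) * τ) (3 * τ)
  rw [show z - (Real.pi:ℂ) * τ + (Real.pi:ℂ) * (3 * τ) = z + 2 * (Real.pi:ℂ) * τ by ring] at q2
  have q3 := jTheta_qper z τ
  have q4 := jTheta_qper (z - (α:ℂ) / 2 + 2 * (Real.pi:ℂ) * τ / 3) τ
  rw [show z - (α:ℂ) / 2 + 2 * (Real.pi:ℂ) * τ / 3 + (Real.pi:ℂ) * τ
      = z + (Real.pi:ℂ) * τ - (α:ℂ) / 2 + 2 * (Real.pi:ℂ) * τ / 3 by ring] at q4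
  have hw3 : (1:ℂ) - Complex.exp (3 * Complex.I * (α:ℂ)) ≠ 0 := sub_ne_zero.mpr (Ne.symm hα)
  have hC := left_ne_zero_of_mul hdX1
  have hD := right_ne_zero_of_mul hdX1
  have hE := right_ne_zero_of_mul hdX2
  have hB := right_ne_zero_of_mul hdX3
  have hP := left_ne_zero_of_mul hdL1
  have hA := right_ne_zero_of_mul hdL1
  have e1 : Complex.exp (-(4 * ((Real.pi:ℝ):ℂ) * τ * Complex.I) / 3)
      = (Complex.exp (Complex.I * (Real.pi:ℂ) * τ / 3) ^ 4)⁻¹ := by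
    rw [← Complex.exp_nat_mul, ← Complex.exp_neg]; congr 1; push_cast; ring
  have e2 : Complex.exp (3 * Complex.I * (α:ℂ)) = Complex.exp (Complex.I * (α:ℂ)) ^ 3 := by
    rw [← Complex.exp_nat_mul]; congr 1; push_cast; ring
  have e3 : Complex.exp (2 * Complex.I * (α:ℂ)) = Complex.exp (Complex.I * (α:ℂ)) ^ 2 := by
    rw [← Complex.exp_nat_mul]; congr 1; push_cast; ring
  have e6 : Complex.exp (-(Complex.I * ((Real.pi:ℝ):ℂ) * (3 * τ)) - 2 * Complex.I * (z - 3 * (Real.pi:ℂ) * τ))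
      = Complex.exp (Complex.I * (Real.pi:ℂ) * τ / 3) ^ 9 * (Complex.exp (Complex.I * z) ^ 2)⁻¹ := by
    rw [← Complex.exp_nat_mul, ← Complex.exp_nat_mul, ← Complex.exp_neg, ← Complex.exp_add]
    congr 1; push_cast; ring
  have e7 : Complex.exp (-(Complex.I * ((Real.pi:ℝ):ℂ) * (3 * τ)) - 2 * Complex.I * (z - (Real.pi:ℂ) * τ))
      = (Complex.exp (Complex.I * (Real.pi:ℂ) * τ / 3) ^ 3)⁻¹ * (Complex.exp (Complex.I * z) ^ 2)⁻¹ := by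
    rw [← Complex.exp_nat_mul, ← Complex.exp_nat_mul, ← Complex.exp_neg, ← Complex.exp_neg,
      ← Complex.exp_add]
    congr 1; push_cast; ring
  have e8 : Complex.exp (-(Complex.I * ((Real.pi:ℝ):ℂ) * τ) - 2 * Complex.I * z)
      = (Complex.exp (Complex.I * (Real.pi:ℂ) * τ / 3) ^ 3)⁻¹ * (Complex.exp (Complex.I * z) ^ 2)⁻¹ := by
    rw [← Complex.exp_nat_mul, ← Complex.exp_nat_mul, ← Complex.exp_neg, ← Complex.exp_neg,
      ← Complex.exp_add]
    congr 1; push_cast; ring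
  have e9 : Complex.exp (-(Complex.I * ((Real.pi:ℝ):ℂ) * τ)
        - 2 * Complex.I * (z - (α:ℂ) / 2 + 2 * (Real.pi:ℂ) * τ / 3))
      = (Complex.exp (Complex.I * (Real.pi:ℂ) * τ / 3) ^ 7)⁻¹ * (Complex.exp (Complex.I * z) ^ 2)⁻¹ *
        Complex.exp (Complex.I * (α:ℂ)) := by
    rw [← Complex.exp_nat_mul, ← Complex.exp_nat_mul, ← Complex.exp_neg, ← Complex.exp_neg,
      ← Complex.exp_add, ← Complex.exp_add]
    congr 1; push_cast; ring
  rw [e6] at q1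
  rw [e7] at q2
  rw [e8] at q3
  rw [e9] at q4
  rw [e2] at hw3
  have hu : Complex.exp (Complex.I * (Real.pi:ℂ) * τ / 3) ≠ 0 := Complex.exp_ne_zero _
  have hv : Complex.exp (Complex.I * z) ≠ 0 := Complex.exp_ne_zero _
  have hXmul : Xfun τ (z - (Real.pi:ℂ) * τ) * Xfun τ z * Xfun τ (z + (Real.pi:ℂ) * τ) = 1 := by
    unfold Xfun
    rw [show z + ((Real.pi:ℝ):ℂ) * τ - ((Real.pi:ℝ):ℂ) * τ = z by ring,
        show z + ((Real.pi:ℝ):ℂ) * τ + ((Real.pi:ℝ):ℂ) * τ = z + 2 * (Real.pi:ℂ) * τ by ring,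
        show z + ((Real.pi:ℝ):ℂ) * τ - 2 * ((Real.pi:ℝ):ℂ) * τ = z - (Real.pi:ℂ) * τ by ring,
        show z - ((Real.pi:ℝ):ℂ) * τ - ((Real.pi:ℝ):ℂ) * τ = z - 2 * (Real.pi:ℂ) * τ by ring,
        show z - ((Real.pi:ℝ):ℂ) * τ + ((Real.pi:ℝ):ℂ) * τ = z by ring,
        show z - ((Real.pi:ℝ):ℂ) * τ - 2 * ((Real.pi:ℝ):ℂ) * τ = z - 3 * (Real.pi:ℂ) * τ by ring]
    rw [q1, q2, e1]
    generalize jTheta (z - 3 * (Real.pi:ℂ) * τ) (3 * τ) = E at hE ⊢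
    generalize jTheta (z - (Real.pi:ℂ) * τ) (3 * τ) = B at hB ⊢
    generalize jTheta (z + (Real.pi:ℂ) * τ) (3 * τ) = C at hC ⊢
    generalize jTheta (z - 2 * (Real.pi:ℂ) * τ) (3 * τ) = D at hD ⊢
    generalize Complex.exp (Complex.I * (Real.pi:ℂ) * τ / 3) = u at hu ⊢
    generalize Complex.exp (Complex.I * z) = v at hv ⊢
    field_simp [hE, hB, hC, hD, hu, hv]

  have hSrel : jTheta (z - (Real.pi:ℂ) * τ) (3 * τ) *
        jTheta (z + (Real.pi:ℂ) * τ - (α:ℂ) / 2 + 2 * (Real.pi:ℂ) * τ / 3) τ /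
        (jTheta (z + (Real.pi:ℂ) * τ) τ * jTheta (z + (Real.pi:ℂ) * τ) (3 * τ))
      = Complex.exp (Complex.I * (α:ℂ)) * Xfun τ z *
        (jTheta (z - 2 * (Real.pi:ℂ) * τ) (3 * τ) *
          jTheta (z - (α:ℂ) / 2 + 2 * (Real.pi:ℂ) * τ / 3) τ / (jTheta z τ * jTheta z (3 * τ))) := by
    rw [q3, q4]
    unfold Xfun
    rw [e1]
    generalize jTheta z (3 * τ) = A at hA ⊢
    generalize jTheta (z - (Real.pi:ℂ) * τ) (3 * τ) = B at hB ⊢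
    generalize jTheta (z + (Real.pi:ℂ) * τ) (3 * τ) = C at hC ⊢
    generalize jTheta (z - 2 * (Real.pi:ℂ) * τ) (3 * τ) = D at hD ⊢
    generalize jTheta z τ = P at hP ⊢
    generalize jTheta (z - (α:ℂ) / 2 + 2 * (Real.pi:ℂ) * τ / 3) τ = F
    generalize Complex.exp (Complex.I * (Real.pi:ℂ) * τ / 3) = u at hu ⊢
    generalize Complex.exp (Complex.I * z) = v at hv ⊢
    generalize Complex.exp (Complex.I * (α:ℂ)) = w
    field_simp [hA, hB, hC, hD, hP, hu, hv]

  unfold Lfun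
  rw [show z + ((Real.pi:ℝ):ℂ) * τ - ((Real.pi:ℝ):ℂ) * τ = z by ring,
      show z + ((Real.pi:ℝ):ℂ) * τ - 2 * ((Real.pi:ℝ):ℂ) * τ = z - (Real.pi:ℂ) * τ by ring]
  rw [e2, e3]
  exact algKey (Xfun τ z) (Xfun τ (z + (Real.pi:ℂ) * τ)) (Xfun τ (z - (Real.pi:ℂ) * τ)) _ _ _ _ _
    hXz hXzp (Complex.exp_ne_zero _) hw3 hXmul rfl hSrel
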